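/- arXiv:2010.06201 — 7 statements merged into one kernel-verified Lean document; each statement's English description precedes it below -/
import Mathlib

section
/- For all real numbers a > 0 and b > 0 and every y in the open interval (0,1) with y ≠ a/(a+b), the strict inequality a·log y + b·log(1−y) < a·log(a/(a+b)) + b·log(b/(a+b)) holds; hence y = a/(a+b) is the unique maximizer of y ↦ a·log y + b·log(1−y) on (0,1). -/
/-- For all real numbers `a > 0`, `b > 0` and every `y ∈ (0,1)` with `y ≠ a/(a+b)`,
`a·log y + b·log (1−y) < a·log (a/(a+b)) + b·log (b/(a+b))`; hence `y = a/(a+b)` is the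
unique maximizer of `y ↦ a·log y + b·log (1−y)` on `(0,1)`. -/
theorem gan_pointwise_optimal_discriminator_lt
    (a b y : ℝ) (ha : 0 < a) (hb : 0 < b) (hy : y ∈ Set.Ioo (0 : ℝ) 1)
    (hne : y ≠ a / (a + b)) :
    a * Real.log y + b * Real.log (1 - y) <
      a * Real.log (a / (a + b)) + b * Real.log (b / (a + b)) := by
  obtain ⟨hy0, hy1⟩ := hy
  have hab : 0 < a + b := by linarith
  have h1y : 0 < 1 - y := by linarith
  -- log(y*(a+b)/a) < y*(a+b)/a - 1
  have harg1 : (0:ℝ) < y * (a + b) / a := by positivity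
  have harg2 : (0:ℝ) < (1 - y) * (a + b) / b := by positivity
  have hne1 : y * (a + b) / a ≠ 1 := by
    intro h
    apply hne
    field_simp at h ⊢
    linarith
  have l1 : Real.log (y * (a + b) / a) < y * (a + b) / a - 1 :=
    Real.log_lt_sub_one_of_pos harg1 hne1
  have l2 : Real.log ((1 - y) * (a + b) / b) ≤ (1 - y) * (a + b) / b - 1 :=
    Real.log_le_sub_one_of_pos harg2
  have e1 : Real.log (y * (a + b) / a) = Real.log y - Real.log (a / (a + b)) := by
    rw [Real.log_div (by positivity) ha.ne', Real.log_mul hy0.ne' hab.ne',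
      Real.log_div ha.ne' hab.ne']
    ring
  have e2 : Real.log ((1 - y) * (a + b) / b) = Real.log (1 - y) - Real.log (b / (a + b)) := by
    rw [Real.log_div (by positivity) hb.ne', Real.log_mul h1y.ne' hab.ne',
      Real.log_div hb.ne' hab.ne']
    ring
  have key : a * Real.log (y * (a + b) / a) + b * Real.log ((1 - y) * (a + b) / b) < 0 := by
    have := add_lt_add_of_lt_of_le (mul_lt_mul_of_pos_left l1 ha)
      (mul_le_mul_of_nonneg_left l2 hb.le)
    have heq : a * (y * (a + b) / a - 1) + b * ((1 - y) * (a + b) / b - 1) = 0 := by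
      field_simp
      ring
    linarith
  rw [e1, e2] at key
  nlinarith [key]
end

section
/- (Optimal discriminator, Theorem 1 of the paper.) Let Z and X be measurable spaces, ζ a probability measure on Z (the latent distribution), G : Z → X a measurable map (the generator), μ a probability measure on X (the data distribution), and ν = G_*ζ the pushforward of ζ under G (the generated distribution). Assume μ ≪ λ and ν ≪ λ for a σ-finite measure λ on X, with densities f = dμ/dλ and g = dν/dλ. Let D* : X → ℝ be defined by D*(x) = f(x)/(f(x)+g(x)) when f(x)+g(x) > 0 and D*(x) = 1/2 otherwise. Then for every measurable D : X → ℝ with 0 < D(x) < 1 for all x, such that the functions f·log D, g·log(1−D), f·log D*, and g·log(1−D*) are all λ-integrable, one has ∫ f·log D dλ + ∫ g·log(1−D) dλ ≤ ∫ f·log D* dλ + ∫ g·log(1−D*) dλ. -/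
open MeasureTheory


lemma gan_pointwise (a b t : ℝ) (ha : 0 ≤ a) (hb : 0 ≤ b) (ht0 : 0 < t) (ht1 : t < 1) :
    a * Real.log t + b * Real.log (1 - t) ≤
      a * Real.log (if 0 < a + b then a / (a + b) else 1 / 2) +
        b * Real.log (1 - (if 0 < a + b then a / (a + b) else 1 / 2)) := by
  by_cases hs : 0 < a + b
  · simp only [if_pos hs]
    have h1t : 0 < 1 - t := by linarith
    have hba : 1 - a / (a + b) = b / (a + b) := by field_simp; ring
    rw [hba]
    rcases eq_or_lt_of_le ha with ha0 | ha
    · rcases eq_or_lt_of_le hb with hb0 | hb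
      · exfalso; rw [← ha0, ← hb0] at hs; linarith
      · rw [← ha0]
        have hb1 : b / (0 + b) = 1 := by field_simp; ring
        rw [hb1]
        simp only [zero_mul, zero_add, Real.log_one, mul_zero, add_zero]
        have : Real.log (1 - t) ≤ 0 := Real.log_nonpos (by linarith) (by linarith)
        nlinarith
    · rcases eq_or_lt_of_le hb with hb0 | hb
      · rw [← hb0]
        have ha1 : a / (a + 0) = 1 := by field_simp; ring
        rw [ha1]
        simp only [zero_mul, add_zero, Real.log_one, mul_zero, zero_add]
        have : Real.log t ≤ 0 := Real.log_nonpos (by linarith) (by linarith)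
        nlinarith
      · -- both positive
        have hA : Real.log t - Real.log (a / (a + b)) = Real.log (t * (a + b) / a) := by
          rw [Real.log_div (by positivity) (by positivity), Real.log_div (by positivity) (by positivity),
            Real.log_mul (by positivity) (by positivity)]
          ring
        have hB : Real.log (1 - t) - Real.log (b / (a + b)) = Real.log ((1 - t) * (a + b) / b) := by
          rw [Real.log_div (by positivity) (by positivity), Real.log_div (by positivity) (by positivity),
            Real.log_mul (by positivity) (by positivity)]
          ring
        have h1 : Real.log (t * (a + b) / a) ≤ t * (a + b) / a - 1 :=
          Real.log_le_sub_one_of_pos (by positivity)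
        have h2 : Real.log ((1 - t) * (a + b) / b) ≤ (1 - t) * (a + b) / b - 1 :=
          Real.log_le_sub_one_of_pos (by positivity)
        have e1 : a * (t * (a + b) / a - 1) = t * (a + b) - a := by field_simp
        have e2 : b * ((1 - t) * (a + b) / b - 1) = (1 - t) * (a + b) - b := by field_simp
        nlinarith [mul_le_mul_of_nonneg_left h1 ha.le, mul_le_mul_of_nonneg_left h2 hb.le]
  · have ha0 : a = 0 := by push_neg at hs; linarith
    have hb0 : b = 0 := by push_neg at hs; linarith
    simp [ha0, hb0]


/-- **Optimal discriminator.** `ζ` is the latent distribution on `Z`, `G : Z → X` the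
generator, `μ` the data distribution, `ν = G_*ζ` the generated distribution; both are
absolutely continuous w.r.t. a σ-finite measure `lam` with densities `f` and `g`.
`Dstar x = f x / (f x + g x)` (and `1/2` where `f x + g x = 0`) maximizes the GAN
discriminator objective among all measurable discriminators with values in `(0,1)`. -/
theorem gan_optimal_discriminator
    {Z X : Type*} [MeasurableSpace Z] [MeasurableSpace X]
    (ζ : Measure Z) [IsProbabilityMeasure ζ]
    (G : Z → X) (hG : Measurable G)
    (μ ν lam : Measure X) [IsProbabilityMeasure μ] [SigmaFinite lam]
    (hν : ν = ζ.map G)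
    (hμlam : μ ≪ lam) (hνlam : ν ≪ lam)
    (f g : X → ℝ) (hf : Measurable f) (hg : Measurable g)
    (hf0 : ∀ x, 0 ≤ f x) (hg0 : ∀ x, 0 ≤ g x)
    (hfd : μ = lam.withDensity fun x => ENNReal.ofReal (f x))
    (hgd : ν = lam.withDensity fun x => ENNReal.ofReal (g x))
    (Dstar : X → ℝ)
    (hDstar : ∀ x, Dstar x = if 0 < f x + g x then f x / (f x + g x) else 1 / 2)
    (D : X → ℝ) (hD : Measurable D) (hD01 : ∀ x, 0 < D x ∧ D x < 1)
    (h1 : Integrable (fun x => f x * Real.log (D x)) lam)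
    (h2 : Integrable (fun x => g x * Real.log (1 - D x)) lam)
    (h3 : Integrable (fun x => f x * Real.log (Dstar x)) lam)
    (h4 : Integrable (fun x => g x * Real.log (1 - Dstar x)) lam) :
    (∫ x, f x * Real.log (D x) ∂lam) + (∫ x, g x * Real.log (1 - D x) ∂lam) ≤
      (∫ x, f x * Real.log (Dstar x) ∂lam) + (∫ x, g x * Real.log (1 - Dstar x) ∂lam) := by
  have key : ∀ x, f x * Real.log (D x) + g x * Real.log (1 - D x) ≤
      f x * Real.log (Dstar x) + g x * Real.log (1 - Dstar x) := fun x => by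
    rw [hDstar x]
    exact gan_pointwise _ _ _ (hf0 x) (hg0 x) (hD01 x).1 (hD01 x).2
  rw [← integral_add h1 h2, ← integral_add h3 h4]
  exact integral_mono (h1.add h2) (h3.add h4) key
end

section
/- Let μ and ν be probability measures on a measurable space X, both absolutely continuous with respect to a σ-finite measure λ, with densities f = dμ/dλ and g = dν/dλ, and assume the function x ↦ f(x)·log(f(x)/(f(x)+g(x))) + g(x)·log(g(x)/(f(x)+g(x))) (with the convention that a term with zero numerator is 0) is λ-integrable. Then ∫ (f·log(f/(f+g)) + g·log(g/(f+g))) dλ = −log 4 if and only if f = g λ-almost everywhere (equivalently, μ = ν); i.e., the global minimum −log 4 of the virtual training criterion C(G) is achieved if and only if the generated distribution equals the data distribution. -/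
open MeasureTheory

lemma term_lb (a s : ℝ) (ha : 0 ≤ a) (hs : 0 < s) :
    a - s / 2 ≤ a * Real.log (a / s) + a * Real.log 2 := by
  rcases eq_or_lt_of_le ha with h | h
  · simp [← h]; linarith
  · have h2a : (0:ℝ) < 2 * a := by linarith
    have hlog : Real.log (s / (2 * a)) ≤ s / (2 * a) - 1 :=
      Real.log_le_sub_one_of_pos (by positivity)
    have hid : Real.log (a / s) + Real.log 2 = -Real.log (s / (2 * a)) := by
      rw [Real.log_div h.ne' hs.ne', Real.log_div hs.ne' h2a.ne',
          Real.log_mul two_ne_zero h.ne']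
      ring
    have h1 : a * Real.log (s / (2 * a)) ≤ a * (s / (2 * a) - 1) :=
      mul_le_mul_of_nonneg_left hlog ha
    have h2 : a * (s / (2 * a)) = s / 2 := by field_simp
    nlinarith [h1, h2]

lemma term_lb_strict (a s : ℝ) (ha : 0 ≤ a) (hs : 0 < s) (hne : 2 * a ≠ s) :
    a - s / 2 < a * Real.log (a / s) + a * Real.log 2 := by
  rcases eq_or_lt_of_le ha with h | h
  · simp [← h]; linarith
  · have h2a : (0:ℝ) < 2 * a := by linarith
    have hlog : Real.log (s / (2 * a)) < s / (2 * a) - 1 :=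
      Real.log_lt_sub_one_of_pos (by positivity)
        (fun h1 => hne (by field_simp at h1; linarith))
    have hid : Real.log (a / s) + Real.log 2 = -Real.log (s / (2 * a)) := by
      rw [Real.log_div h.ne' hs.ne', Real.log_div hs.ne' h2a.ne',
          Real.log_mul two_ne_zero h.ne']
      ring
    have h1 : a * Real.log (s / (2 * a)) < a * (s / (2 * a) - 1) :=
      (mul_lt_mul_iff_right₀ h).mpr hlog
    have h2 : a * (s / (2 * a)) = s / 2 := by field_simp
    nlinarith [h1, h2]

lemma E_nonneg (a b : ℝ) (ha : 0 ≤ a) (hb : 0 ≤ b) :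
    0 ≤ a * Real.log (a / (a + b)) + b * Real.log (b / (a + b)) + (a + b) * Real.log 2 := by
  rcases eq_or_lt_of_le (add_nonneg ha hb) with h | h
  · have ha0 : a = 0 := by linarith
    have hb0 : b = 0 := by linarith
    simp [ha0, hb0]
  · have t1 := term_lb a (a + b) ha h
    have t2 := term_lb b (a + b) hb h
    nlinarith

lemma E_eq_zero_iff (a b : ℝ) (ha : 0 ≤ a) (hb : 0 ≤ b) :
    a * Real.log (a / (a + b)) + b * Real.log (b / (a + b)) + (a + b) * Real.log 2 = 0 ↔
      a = b := by
  constructor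
  · intro hE
    by_contra hab
    rcases eq_or_lt_of_le (add_nonneg ha hb) with h | h
    · exact hab (by linarith : a = b)
    · have t1 := term_lb_strict a (a + b) ha h (by intro hh; exact hab (by linarith))
      have t2 := term_lb b (a + b) hb h
      nlinarith
  · rintro rfl
    rcases eq_or_lt_of_le ha with h | h
    · simp [← h]
    · have : a / (a + a) = 1 / 2 := by field_simp; ring
      rw [this]
      rw [one_div, Real.log_inv]
      ring

/-- The global minimum `−log 4` of the GAN virtual training criterion
`C(G) = ∫ (f·log (f/(f+g)) + g·log (g/(f+g))) dλ` is achieved iff `f = g` `λ`-a.e.,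
i.e. iff the generated distribution equals the data distribution. -/
theorem gan_criterion_eq_neg_log_four_iff
    {X : Type*} [MeasurableSpace X]
    (μ ν lam : Measure X) [IsProbabilityMeasure μ] [IsProbabilityMeasure ν]
    [SigmaFinite lam]
    (hμlam : μ ≪ lam) (hνlam : ν ≪ lam)
    (f g : X → ℝ) (hf : Measurable f) (hg : Measurable g)
    (hf0 : ∀ x, 0 ≤ f x) (hg0 : ∀ x, 0 ≤ g x)
    (hfd : μ = lam.withDensity fun x => ENNReal.ofReal (f x))
    (hgd : ν = lam.withDensity fun x => ENNReal.ofReal (g x))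
    (hint : Integrable (fun x =>
      f x * Real.log (f x / (f x + g x)) + g x * Real.log (g x / (f x + g x))) lam) :
    (∫ x, (f x * Real.log (f x / (f x + g x)) + g x * Real.log (g x / (f x + g x))) ∂lam)
        = -Real.log 4 ↔ f =ᵐ[lam] g := by
  have hfl : ∫⁻ x, ENNReal.ofReal (f x) ∂lam = 1 := by
    have h1 := measure_univ (μ := μ)
    rwa [hfd, withDensity_apply _ MeasurableSet.univ, setLIntegral_univ] at h1
  have hgl : ∫⁻ x, ENNReal.ofReal (g x) ∂lam = 1 := by
    have h1 := measure_univ (μ := ν)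
    rwa [hgd, withDensity_apply _ MeasurableSet.univ, setLIntegral_univ] at h1
  have hfi : Integrable f lam := ⟨hf.aestronglyMeasurable,
    (hasFiniteIntegral_iff_ofReal (ae_of_all _ hf0)).mpr
      (by rw [hfl]; exact ENNReal.one_lt_top)⟩
  have hgi : Integrable g lam := ⟨hg.aestronglyMeasurable,
    (hasFiniteIntegral_iff_ofReal (ae_of_all _ hg0)).mpr
      (by rw [hgl]; exact ENNReal.one_lt_top)⟩
  have hfint : ∫ x, f x ∂lam = 1 := by
    rw [integral_eq_lintegral_of_nonneg_ae (ae_of_all _ hf0) hf.aestronglyMeasurable, hfl]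
    simp
  have hgint : ∫ x, g x ∂lam = 1 := by
    rw [integral_eq_lintegral_of_nonneg_ae (ae_of_all _ hg0) hg.aestronglyMeasurable, hgl]
    simp
  have hlog4 : Real.log 4 = 2 * Real.log 2 := by
    rw [show (4:ℝ) = 2 ^ 2 by norm_num, Real.log_pow]
    push_cast; ring
  set H : X → ℝ := fun x =>
    f x * Real.log (f x / (f x + g x)) + g x * Real.log (g x / (f x + g x))
      + (f x + g x) * Real.log 2 with hHdef
  have hHi : Integrable H lam := hint.add ((hfi.add hgi).mul_const (Real.log 2))
  have hHint : ∫ x, H x ∂lam =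
      (∫ x, (f x * Real.log (f x / (f x + g x)) + g x * Real.log (g x / (f x + g x))) ∂lam)
        + Real.log 4 := by
    have h2 : Integrable (fun x => (f x + g x) * Real.log 2) lam :=
      (hfi.add hgi).mul_const _
    have h3 : Integrable (fun x => f x + g x) lam := hfi.add hgi
    rw [hHdef]
    simp only
    rw [integral_add hint h2, integral_mul_const, integral_add hfi hgi, hfint, hgint, hlog4]
    ring
  have hHnn : 0 ≤ H := fun x => E_nonneg (f x) (g x) (hf0 x) (hg0 x)
  have key : ∫ x, H x ∂lam = 0 ↔ H =ᵐ[lam] 0 :=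
    integral_eq_zero_iff_of_nonneg hHnn hHi
  constructor
  · intro hC
    have h0 : ∫ x, H x ∂lam = 0 := by rw [hHint, hC]; ring
    filter_upwards [key.mp h0] with x hx
    exact (E_eq_zero_iff (f x) (g x) (hf0 x) (hg0 x)).mp hx
  · intro hfg
    have h0 : H =ᵐ[lam] 0 := by
      filter_upwards [hfg] with x hx
      exact (E_eq_zero_iff (f x) (g x) (hf0 x) (hg0 x)).mpr hx
    have := key.mpr h0
    rw [hHint] at this
    linarith
end

section
/- Let μ and ν be probability measures on a measurable space X, both absolutely continuous with respect to a σ-finite measure λ, with densities f = dμ/dλ and g = dν/dλ, and let m = (1/2)·μ + (1/2)·ν be the midpoint measure. If the function x ↦ f(x)·log(f(x)/(f(x)+g(x))) + g(x)·log(g(x)/(f(x)+g(x))) (with the convention that a term with zero numerator is 0) is λ-integrable, then the Kullback–Leibler divergences KL(μ ‖ m) and KL(ν ‖ m) are finite and KL(μ ‖ m) + KL(ν ‖ m) = log 4 + ∫ (f·log(f/(f+g)) + g·log(g/(f+g))) dλ; in other words, the GAN objective at the optimal discriminator equals −log 4 plus twice the Jensen–Shannon divergence between μ and ν. -/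
open MeasureTheory
open scoped ENNReal

/-- Auxiliary lemma: computation of one KL term. -/
lemma gan_aux
    {X : Type*} [MeasurableSpace X]
    (lam : Measure X) [SigmaFinite lam]
    (f g : X → ℝ) (hf : Measurable f) (hg : Measurable g)
    (hf0 : ∀ x, 0 ≤ f x) (hg0 : ∀ x, 0 ≤ g x)
    (μ : Measure X)
    (hfd : μ = lam.withDensity fun x => ENNReal.ofReal (f x))
    [IsProbabilityMeasure μ]
    (m : Measure X) [SigmaFinite m]
    (hmd : m = lam.withDensity fun x => 2⁻¹ * ENNReal.ofReal (f x + g x))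
    (hint1 : Integrable (fun x => f x * Real.log (f x / (f x + g x))) lam) :
    Integrable (fun x => Real.log ((μ.rnDeriv m x).toReal)) μ ∧
      ∫ x, Real.log ((μ.rnDeriv m x).toReal) ∂μ =
        Real.log 2 + ∫ x, f x * Real.log (f x / (f x + g x)) ∂lam := by
  set k : X → ℝ≥0∞ := fun x => ENNReal.ofReal (f x) / (2⁻¹ * ENNReal.ofReal (f x + g x))
    with hk_def
  have hk_meas : Measurable k :=
    hf.ennreal_ofReal.div (measurable_const.mul (hf.add hg).ennreal_ofReal)
  -- pointwise: density of m times k equals density of μ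
  have hptwise : ∀ x, (2⁻¹ * ENNReal.ofReal (f x + g x)) * k x = ENNReal.ofReal (f x) := by
    intro x
    rcases eq_or_lt_of_le (hf0 x) with hfx | hfx
    · have : ENNReal.ofReal (f x) = 0 := by simp [← hfx]
      simp [hk_def, this]
    · have hs : 0 < f x + g x := lt_of_lt_of_le hfx (le_add_of_nonneg_right (hg0 x))
      have h0 : (2⁻¹ * ENNReal.ofReal (f x + g x)) ≠ 0 :=
        mul_ne_zero (by norm_num) (ENNReal.ofReal_pos.2 hs).ne'
      have htop : (2⁻¹ * ENNReal.ofReal (f x + g x)) ≠ ∞ :=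
        ENNReal.mul_ne_top (by norm_num) ENNReal.ofReal_ne_top
      rw [hk_def]
      exact ENNReal.mul_div_cancel h0 htop
  have hμm : μ = m.withDensity k := by
    rw [hmd, ← withDensity_mul _ (f := fun x => 2⁻¹ * ENNReal.ofReal (f x + g x)) (measurable_const.mul
      (hf.add hg).ennreal_ofReal) hk_meas, hfd]
    congr 1
    ext x
    exact (hptwise x).symm
  have habs : μ ≪ m := by
    rw [hμm]; exact withDensity_absolutelyContinuous _ _
  have hrn : μ.rnDeriv m =ᵐ[μ] k := by
    have h1 : (m.withDensity k).rnDeriv m =ᵐ[m] k :=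
      Measure.rnDeriv_withDensity m hk_meas
    rw [← hμm] at h1
    exact habs.ae_le h1
  -- μ-a.e., f is positive
  have hfpos : ∀ᵐ x ∂μ, 0 < f x := by
    rw [hfd]
    have hs : MeasurableSet {x | f x ≤ 0} := measurableSet_le hf measurable_const
    rw [ae_iff]
    have : {x | ¬ 0 < f x} = {x | f x ≤ 0} := by ext x; simp
    rw [this, withDensity_apply _ hs]
    rw [setLIntegral_congr_fun hs ((fun x hx => by
      have : f x = 0 := le_antisymm hx (hf0 x)
      simp [this] : ∀ x ∈ {x | f x ≤ 0}, ENNReal.ofReal (f x) = (0:ℝ≥0∞)))]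
    simp
  -- a.e. identification of the log term
  have haeq : (fun x => Real.log ((μ.rnDeriv m x).toReal)) =ᵐ[μ]
      fun x => Real.log 2 + Real.log (f x / (f x + g x)) := by
    filter_upwards [hrn, hfpos] with x hx hfx
    have hs : 0 < f x + g x := lt_of_lt_of_le hfx (le_add_of_nonneg_right (hg0 x))
    have hkval : (k x).toReal = 2 * (f x / (f x + g x)) := by
      rw [hk_def]
      rw [ENNReal.toReal_div, ENNReal.toReal_mul, ENNReal.toReal_ofReal (le_of_lt hs),
        ENNReal.toReal_ofReal (le_of_lt hfx)]
      rw [show ((2:ℝ≥0∞)⁻¹).toReal = (2:ℝ)⁻¹ by simp]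
      field_simp
    rw [hx, hkval, Real.log_mul (by norm_num) (ne_of_gt (div_pos hfx hs))]
  have hmain_int : Integrable (fun x => Real.log (f x / (f x + g x))) μ := by
    rw [hfd]
    rw [integrable_withDensity_iff hf.ennreal_ofReal
      (ae_of_all _ fun x => ENNReal.ofReal_lt_top)]
    refine hint1.congr ?_
    refine ae_of_all _ fun x => ?_
    simp only [ENNReal.toReal_ofReal (hf0 x)]
    ring
  have hint_log : Integrable (fun x => Real.log ((μ.rnDeriv m x).toReal)) μ := by
    refine (Integrable.add (integrable_const (Real.log 2)) hmain_int).congr haeq.symm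
  refine ⟨hint_log, ?_⟩
  rw [integral_congr_ae haeq, integral_add (integrable_const _) hmain_int,
    integral_const]
  simp only [measure_univ, ENNReal.toReal_one, probReal_univ, one_smul]
  congr 1
  -- now compute the integral over μ as an integral over lam
  have hofReal : (fun x => ENNReal.ofReal (f x)) = fun x => ((f x).toNNReal : ℝ≥0∞) := rfl
  rw [hfd, hofReal, integral_withDensity_eq_integral_smul hf.real_toNNReal]
  refine integral_congr_ae (ae_of_all _ fun x => ?_)
  simp only [NNReal.smul_def, smul_eq_mul, Real.coe_toNNReal _ (hf0 x)]

/-- With `m = (1/2)·μ + (1/2)·ν` the midpoint measure, the Kullback–Leibler divergences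
`KL(μ‖m) = ∫ log (dμ/dm) dμ` and `KL(ν‖m)` are finite (the log-density is integrable) and
`KL(μ‖m) + KL(ν‖m) = log 4 + ∫ (f·log (f/(f+g)) + g·log (g/(f+g))) dλ`;
i.e. the GAN objective at the optimal discriminator is `−log 4` plus twice the
Jensen–Shannon divergence of `μ` and `ν`. -/
theorem gan_criterion_eq_jensen_shannon
    {X : Type*} [MeasurableSpace X]
    (μ ν lam : Measure X) [IsProbabilityMeasure μ] [IsProbabilityMeasure ν]
    [SigmaFinite lam]
    (hμlam : μ ≪ lam) (hνlam : ν ≪ lam)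
    (f g : X → ℝ) (hf : Measurable f) (hg : Measurable g)
    (hf0 : ∀ x, 0 ≤ f x) (hg0 : ∀ x, 0 ≤ g x)
    (hfd : μ = lam.withDensity fun x => ENNReal.ofReal (f x))
    (hgd : ν = lam.withDensity fun x => ENNReal.ofReal (g x))
    (m : Measure X) (hm : m = (2⁻¹ : ℝ≥0∞) • μ + (2⁻¹ : ℝ≥0∞) • ν)
    (hint : Integrable (fun x =>
      f x * Real.log (f x / (f x + g x)) + g x * Real.log (g x / (f x + g x))) lam) :
    Integrable (fun x => Real.log ((μ.rnDeriv m x).toReal)) μ ∧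
    Integrable (fun x => Real.log ((ν.rnDeriv m x).toReal)) ν ∧
    (∫ x, Real.log ((μ.rnDeriv m x).toReal) ∂μ) +
        (∫ x, Real.log ((ν.rnDeriv m x).toReal) ∂ν) =
      Real.log 4 +
        ∫ x, (f x * Real.log (f x / (f x + g x)) + g x * Real.log (g x / (f x + g x))) ∂lam := by
  -- m as a density over lam
  have hmd : m = lam.withDensity fun x => 2⁻¹ * ENNReal.ofReal (f x + g x) := by
    rw [hm, hfd, hgd, ← withDensity_smul _ hf.ennreal_ofReal,
      ← withDensity_smul _ hg.ennreal_ofReal,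
      ← withDensity_add_right _ (hg.ennreal_ofReal.const_smul (2⁻¹ : ℝ≥0∞))]
    congr 1
    ext x
    simp only [Pi.add_apply, Pi.smul_apply, smul_eq_mul]
    rw [ENNReal.ofReal_add (hf0 x) (hg0 x), mul_add]
  have hmprob : IsProbabilityMeasure m := by
    constructor
    rw [hm]
    simp [measure_univ]
    rw [ENNReal.inv_two_add_inv_two]
  have : SigmaFinite m := by infer_instance
  -- nonpositivity of each term
  have hterm : ∀ (u v : X → ℝ), (∀ x, 0 ≤ u x) → (∀ x, 0 ≤ v x) →
      ∀ x, u x * Real.log (u x / (u x + v x)) ≤ 0 := by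
    intro u v hu hv x
    apply mul_nonpos_of_nonneg_of_nonpos (hu x)
    apply Real.log_nonpos (div_nonneg (hu x) (add_nonneg (hu x) (hv x)))
    exact div_le_one_of_le₀ (le_add_of_nonneg_right (hv x)) (add_nonneg (hu x) (hv x))
  -- integrability of each summand
  have hmeas1 : AEStronglyMeasurable
      (fun x => f x * Real.log (f x / (f x + g x))) lam :=
    (hf.mul ((hf.div (hf.add hg)).log)).aestronglyMeasurable
  have hmeas2 : AEStronglyMeasurable
      (fun x => g x * Real.log (g x / (f x + g x))) lam :=
    (hg.mul ((hg.div (hf.add hg)).log)).aestronglyMeasurable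
  have habs_le : ∀ a b : ℝ, a ≤ 0 → b ≤ 0 → |a| ≤ |a + b| := by
    intro a b ha hb
    rw [abs_of_nonpos ha, abs_of_nonpos (by linarith)]
    linarith
  have hint1 : Integrable (fun x => f x * Real.log (f x / (f x + g x))) lam := by
    refine hint.mono hmeas1 (ae_of_all _ fun x => ?_)
    simp only [Real.norm_eq_abs]
    exact habs_le _ _ (hterm f g hf0 hg0 x)
      (by simpa [add_comm (f x)] using hterm g f hg0 hf0 x)
  have hint2 : Integrable (fun x => g x * Real.log (g x / (f x + g x))) lam := by
    refine hint.mono hmeas2 (ae_of_all _ fun x => ?_)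
    simp only [Real.norm_eq_abs]
    rw [add_comm (f x * _)]
    exact habs_le _ _ (by simpa [add_comm (f x)] using hterm g f hg0 hf0 x)
      (hterm f g hf0 hg0 x)
  obtain ⟨hI1, hE1⟩ := gan_aux lam f g hf hg hf0 hg0 μ hfd m hmd hint1
  have hmd' : m = lam.withDensity fun x => 2⁻¹ * ENNReal.ofReal (g x + f x) := by
    rw [hmd]; congr 1; ext x; rw [add_comm (f x)]
  have hint2' : Integrable (fun x => g x * Real.log (g x / (g x + f x))) lam := by
    refine hint2.congr (ae_of_all _ fun x => by simp [add_comm (f x) (g x)])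
  obtain ⟨hI2, hE2⟩ := gan_aux lam g f hg hf hg0 hf0 ν hgd m hmd' hint2'
  refine ⟨hI1, hI2, ?_⟩
  rw [hE1, hE2, integral_add hint1 hint2]
  have h2' : ∫ x, g x * Real.log (g x / (g x + f x)) ∂lam
      = ∫ x, g x * Real.log (g x / (f x + g x)) ∂lam := by
    refine integral_congr_ae (ae_of_all _ fun x => by simp [add_comm (g x) (f x)])
  rw [h2']
  have hlog4 : Real.log 4 = Real.log 2 + Real.log 2 := by
    rw [show (4:ℝ) = 2 * 2 by norm_num, Real.log_mul two_ne_zero two_ne_zero]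
  rw [hlog4]
  ring
end

section
/- Let P and A be n×n complex matrices with P Hermitian and P² = 1, and let ψ ∈ ℂⁿ. Define f : ℝ → ℂ by f(θ) = ⟨exp(−(i·θ/2)·P)ψ, A·exp(−(i·θ/2)·P)ψ⟩, where ⟨·,·⟩ is the standard Hermitian inner product on ℂⁿ and exp is the matrix exponential. Then there exist constants a, b, c ∈ ℂ such that f(θ) = a + b·cos θ + c·sin θ for all real θ. -/
open Matrix

lemma exp_involution_formula {n : ℕ} (P : Matrix (Fin n) (Fin n) ℂ)
    (hP : P * P = 1) (θ : ℝ) :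
    NormedSpace.exp ((-(Complex.I * (θ : ℂ) / 2)) • P) =
      ((Real.cos (θ / 2) : ℂ)) • (1 : Matrix (Fin n) (Fin n) ℂ) +
        (-Complex.I * (Real.sin (θ / 2) : ℂ)) • P := by
  letI : NormedRing (Matrix (Fin n) (Fin n) ℂ) := Matrix.frobeniusNormedRing
  letI : NormedAlgebra ℂ (Matrix (Fin n) (Fin n) ℂ) := Matrix.frobeniusNormedAlgebra
  set z : ℂ := -(Complex.I * (θ : ℂ) / 2) with hz
  have hz2 : z ^ 2 = -(((θ / 2 : ℝ) : ℂ)) ^ 2 := by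
    simp only [hz]
    push_cast
    ring_nf
    simp only [Complex.I_sq]
    ring
  have hP2k : ∀ k : ℕ, P ^ (2 * k) = 1 := by
    intro k
    rw [pow_mul, sq, hP, one_pow]
  have hzpow : ∀ k : ℕ, z ^ (2 * k) = (-1) ^ k * ((θ / 2 : ℝ) : ℂ) ^ (2 * k) := by
    intro k
    rw [pow_mul, hz2, neg_pow, pow_mul]
  rw [NormedSpace.exp_eq_tsum (𝕂 := ℂ)]
  refine HasSum.tsum_eq ?_
  have heven : HasSum (fun k : ℕ => (((2 * k).factorial : ℂ))⁻¹ • (z • P) ^ (2 * k))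
      (((Real.cos (θ / 2) : ℂ)) • (1 : Matrix (Fin n) (Fin n) ℂ)) := by
    have h := (Complex.hasSum_cos ((θ / 2 : ℝ) : ℂ)).smul_const
      (1 : Matrix (Fin n) (Fin n) ℂ)
    rw [Complex.ofReal_cos]
    convert h using 2 with k
    rw [smul_pow, hP2k, hzpow]
    rw [smul_smul]
    congr 1
    field_simp
  have hodd : HasSum (fun k : ℕ => (((2 * k + 1).factorial : ℂ))⁻¹ • (z • P) ^ (2 * k + 1))
      ((-Complex.I * (Real.sin (θ / 2) : ℂ)) • P) := by
    have h := ((Complex.hasSum_sin ((θ / 2 : ℝ) : ℂ)).mul_left (-Complex.I)).smul_const P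
    rw [Complex.ofReal_sin]
    convert h using 2 with k
    rw [smul_pow, pow_succ P (2 * k), hP2k, one_mul, smul_smul]
    congr 1
    rw [pow_succ z (2 * k), hzpow, hz]
    push_cast
    field_simp
    ring
  exact HasSum.even_add_odd heven hodd

/-- For a Hermitian involution `P` (`P² = 1`), an observable `A`, and a state `ψ ∈ ℂⁿ`,
the expectation value `f θ = ⟨exp (−(i·θ/2)·P) ψ, A · exp (−(i·θ/2)·P) ψ⟩` depends
sinusoidally on `θ`: there are `a b c : ℂ` with `f θ = a + b·cos θ + c·sin θ`. -/
theorem rotation_expectation_sinusoidal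
    {n : ℕ} (P A : Matrix (Fin n) (Fin n) ℂ)
    (hHerm : P.IsHermitian) (hP : P * P = 1) (ψ : Fin n → ℂ) :
    ∃ a b c : ℂ, ∀ θ : ℝ,
      star ((NormedSpace.exp ((-(Complex.I * (θ : ℂ) / 2)) • P)).mulVec ψ) ⬝ᵥ
          (A.mulVec ((NormedSpace.exp ((-(Complex.I * (θ : ℂ) / 2)) • P)).mulVec ψ)) =
        a + b * Real.cos θ + c * Real.sin θ := by
  set x : ℂ := star ψ ⬝ᵥ A.mulVec ψ
  set u : ℂ := star ψ ⬝ᵥ A.mulVec (P.mulVec ψ)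
  set v : ℂ := star (P.mulVec ψ) ⬝ᵥ A.mulVec ψ
  set w : ℂ := star (P.mulVec ψ) ⬝ᵥ A.mulVec (P.mulVec ψ)
  refine ⟨(x + w) / 2, (x - w) / 2, Complex.I * (v - u) / 2, fun θ => ?_⟩
  rw [exp_involution_formula P hP θ]
  set cs : ℝ := Real.cos (θ / 2)
  set sn : ℝ := Real.sin (θ / 2)
  have hcos : (Real.cos θ : ℂ) = 2 * (cs : ℂ) ^ 2 - 1 := by
    have : Real.cos θ = 2 * cs ^ 2 - 1 := by
      rw [show θ = 2 * (θ / 2) by ring, Real.cos_two_mul]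
    rw [this]; push_cast; ring
  have hsin : (Real.sin θ : ℂ) = 2 * (sn : ℂ) * (cs : ℂ) := by
    have : Real.sin θ = 2 * sn * cs := by
      rw [show θ = 2 * (θ / 2) by ring, Real.sin_two_mul]
    rw [this]; push_cast; ring
  have hpy : (sn : ℂ) ^ 2 = 1 - (cs : ℂ) ^ 2 := by
    have := Real.sin_sq_add_cos_sq (θ / 2)
    have h2 : (sn : ℝ) ^ 2 = 1 - cs ^ 2 := by linarith
    calc (sn : ℂ) ^ 2 = ((sn ^ 2 : ℝ) : ℂ) := by push_cast; ring
    _ = ((1 - cs ^ 2 : ℝ) : ℂ) := by rw [h2]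
    _ = 1 - (cs : ℂ) ^ 2 := by push_cast; ring
  rw [hcos, hsin]
  simp only [add_mulVec, smul_mulVec, one_mulVec, star_add, star_smul,
    Matrix.mulVec_add, Matrix.mulVec_smul, dotProduct_add, add_dotProduct,
    smul_dotProduct, dotProduct_smul, star_mul', star_neg, Complex.star_def,
    Complex.conj_I, Complex.conj_ofReal, smul_eq_mul]
  linear_combination w * hpy + (-(sn : ℂ) ^ 2 * w) * Complex.I_sq
end

section
/- Let f : ℝ → ℂ be of the form f(θ) = a + b·cos θ + c·sin θ for constants a, b, c ∈ ℂ. Then for every real θ, f is differentiable at θ and its derivative satisfies f′(θ) = (f(θ + π/2) − f(θ − π/2))/2. -/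
open Real

/-- **Parameter shift rule, trigonometric form.** If `f θ = a + b·cos θ + c·sin θ`,
then `f` is differentiable at every `θ` with derivative
`(f (θ + π/2) − f (θ − π/2))/2`. -/
theorem parameter_shift_rule_sinusoidal
    (a b c : ℂ) (f : ℝ → ℂ)
    (hf : ∀ θ : ℝ, f θ = a + b * Real.cos θ + c * Real.sin θ) (θ : ℝ) :
    HasDerivAt f ((f (θ + π / 2) - f (θ - π / 2)) / 2) θ := by
  have hfun : f = fun θ : ℝ => a + b * Real.cos θ + c * Real.sin θ := funext hf
  have h : HasDerivAt (fun θ : ℝ => a + b * Real.cos θ + c * Real.sin θ)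
      ((0:ℂ) + b * -(Real.sin θ : ℂ) + c * (Real.cos θ : ℂ)) θ := by
    have hc : HasDerivAt (fun θ : ℝ => (Real.cos θ : ℂ)) (-Real.sin θ : ℝ) θ := by
      simpa using ((Real.hasDerivAt_cos θ).ofReal_comp)
    have hs : HasDerivAt (fun θ : ℝ => (Real.sin θ : ℂ)) (Real.cos θ : ℝ) θ := by
      simpa using ((Real.hasDerivAt_sin θ).ofReal_comp)
    have := ((hasDerivAt_const θ a).add (hc.const_mul b)).add (hs.const_mul c)
    rw [Complex.ofReal_neg] at this
    exact this
  rw [hfun]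
  convert h using 1
  simp only []
  push_cast [Real.cos_add, Real.sin_add, Real.cos_sub, Real.sin_sub]
  simp
  ring
end

section
/- (Parameter shift rule.) Let P and A be n×n complex matrices with P Hermitian and P² = 1, and let ψ ∈ ℂⁿ. Define f : ℝ → ℂ by f(θ) = ⟨exp(−(i·θ/2)·P)ψ, A·exp(−(i·θ/2)·P)ψ⟩, where ⟨·,·⟩ is the standard Hermitian inner product on ℂⁿ and exp is the matrix exponential. Then f is differentiable and for every real θ, f′(θ) = (f(θ + π/2) − f(θ − π/2))/2; i.e., the gradient of the circuit expectation with respect to the rotation angle is obtained by evaluating the same expectation at the angle shifted by ±π/2. -/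
open Matrix Real

lemma exp_smul_involution {n : ℕ} (P : Matrix (Fin n) (Fin n) ℂ)
    (hP : P * P = 1) (z : ℂ) :
    NormedSpace.exp ((-(Complex.I * z)) • P)
      = Complex.cos z • (1 : Matrix (Fin n) (Fin n) ℂ) - (Complex.I * Complex.sin z) • P := by
  have hpow : ∀ k : ℕ, (-(Complex.I * z)) ^ (2 * k) = (-1) ^ k * z ^ (2 * k) := by
    intro k
    rw [pow_mul, pow_mul, show (-(Complex.I * z)) ^ 2 = -(z ^ 2) by
      rw [neg_pow, mul_pow, Complex.I_sq]; ring, neg_pow]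
  rw [NormedSpace.exp_eq_tsum ℂ]
  refine HasSum.tsum_eq ?_
  have hsub : Complex.cos z • (1 : Matrix (Fin n) (Fin n) ℂ) - (Complex.I * Complex.sin z) • P
      = Complex.cos z • (1 : Matrix (Fin n) (Fin n) ℂ) + ((-Complex.I) * Complex.sin z) • P := by
    rw [neg_mul, neg_smul, sub_eq_add_neg]
  rw [hsub]
  refine HasSum.even_add_odd ?_ ?_
  · have h := (Complex.hasSum_cos z).smul_const (1 : Matrix (Fin n) (Fin n) ℂ)
    convert h using 2 with k
    · rfl
    rw [smul_pow, pow_mul P, sq, hP, one_pow, smul_smul, hpow]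
    congr 1
    field_simp
  · have h := ((Complex.hasSum_sin z).mul_left (-Complex.I)).smul_const P
    convert h using 2 with k
    · rfl
    rw [smul_pow, pow_succ P, pow_mul P, sq, hP, one_pow, one_mul, smul_smul,
      pow_succ, hpow]
    congr 1
    field_simp
    ring

/-- **Parameter shift rule.** For a Hermitian involution `P` (`P² = 1`), an observable `A`
and a state `ψ ∈ ℂⁿ`, the expectation
`f θ = ⟨exp (−(i·θ/2)·P) ψ, A · exp (−(i·θ/2)·P) ψ⟩` is differentiable in `θ` and its
derivative is obtained from two evaluations at shifted angles:
`f′(θ) = (f (θ + π/2) − f (θ − π/2))/2`. -/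
theorem parameter_shift_rule
    {n : ℕ} (P A : Matrix (Fin n) (Fin n) ℂ)
    (hHerm : P.IsHermitian) (hP : P * P = 1) (ψ : Fin n → ℂ)
    (f : ℝ → ℂ)
    (hf : ∀ θ : ℝ, f θ =
      star ((NormedSpace.exp ((-(Complex.I * (θ : ℂ) / 2)) • P)).mulVec ψ) ⬝ᵥ
        (A.mulVec ((NormedSpace.exp ((-(Complex.I * (θ : ℂ) / 2)) • P)).mulVec ψ)))
    (θ : ℝ) :
    HasDerivAt f ((f (θ + π / 2) - f (θ - π / 2)) / 2) θ := by
  set v : Fin n → ℂ := P.mulVec ψ with hv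
  set a : ℂ := star ψ ⬝ᵥ A.mulVec ψ with ha
  set b : ℂ := star v ⬝ᵥ A.mulVec ψ with hb
  set c : ℂ := star ψ ⬝ᵥ A.mulVec v with hc
  set d : ℂ := star v ⬝ᵥ A.mulVec v with hd
  have hkey : ∀ t : ℝ, f t = (a + d)/2 + ((a - d)/2) * (Real.cos t : ℂ)
      + (Complex.I * (b - c)/2) * (Real.sin t : ℂ) := by
    intro t
    have harg : -(Complex.I * (t:ℂ) / 2) = -(Complex.I * (((t/2 : ℝ)) : ℂ)) := by
      push_cast; ring
    rw [hf t, harg, exp_smul_involution P hP]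
    rw [← Complex.ofReal_cos, ← Complex.ofReal_sin]
    have hexp : (((Real.cos (t/2) : ℝ) : ℂ) • (1 : Matrix (Fin n) (Fin n) ℂ)
          - (Complex.I * ((Real.sin (t/2) : ℝ) : ℂ)) • P).mulVec ψ
        = ((Real.cos (t/2) : ℝ) : ℂ) • ψ - (Complex.I * ((Real.sin (t/2) : ℝ) : ℂ)) • v := by
      rw [Matrix.sub_mulVec, Matrix.smul_mulVec, Matrix.smul_mulVec,
        Matrix.one_mulVec]
    rw [hexp]
    simp only [star_sub, star_smul, Matrix.mulVec_sub, Matrix.mulVec_smul,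
      sub_dotProduct, dotProduct_sub, smul_dotProduct,
      dotProduct_smul, smul_eq_mul, star_mul', Complex.star_def,
      Complex.conj_ofReal, Complex.conj_I]
    rw [← ha, ← hb, ← hc, ← hd]
    have e1 : Real.cos t = Real.cos (t/2)^2 - Real.sin (t/2)^2 := by
      have h := Real.cos_two_mul (t/2)
      rw [show 2*(t/2) = t by ring] at h
      have h2 := Real.sin_sq_add_cos_sq (t/2)
      linarith
    have e2 : Real.sin t = 2 * Real.sin (t/2) * Real.cos (t/2) := by
      have h := Real.sin_two_mul (t/2)
      rwa [show 2*(t/2) = t by ring] at h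
    have e3 : Complex.sin ((t:ℂ)/2)^2 + Complex.cos ((t:ℂ)/2)^2 = 1 :=
      Complex.sin_sq_add_cos_sq _
    rw [e1, e2]
    push_cast
    linear_combination ((a+d)/2) * e3 - (Complex.sin ((t:ℂ)/2))^2 * d * Complex.I_sq
  -- derivative part
  set K0 : ℂ := (a + d)/2
  set K1 : ℂ := (a - d)/2
  set K2 : ℂ := Complex.I * (b - c)/2
  have hfun : f = fun t : ℝ => K0 + K1 * (Real.cos t : ℂ) + K2 * (Real.sin t : ℂ) :=
    funext hkey
  have hD : HasDerivAt (fun t : ℝ => K0 + K1 * (Real.cos t : ℂ) + K2 * (Real.sin t : ℂ))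
      (K1 * ((-Real.sin θ : ℝ) : ℂ) + K2 * ((Real.cos θ : ℝ) : ℂ)) θ := by
    have h1 := ((Real.hasDerivAt_cos θ).ofReal_comp).const_mul K1
    have h2 := ((Real.hasDerivAt_sin θ).ofReal_comp).const_mul K2
    exact (((hasDerivAt_const θ K0).add h1).add h2).congr_deriv (by simp)
  have h2 : HasDerivAt f (K1 * ((-Real.sin θ : ℝ) : ℂ) + K2 * ((Real.cos θ : ℝ) : ℂ)) θ := by
    rw [hfun]; exact hD
  have heq : (f (θ + π / 2) - f (θ - π / 2)) / 2
      = K1 * ((-Real.sin θ : ℝ) : ℂ) + K2 * ((Real.cos θ : ℝ) : ℂ) := by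
    rw [hkey (θ + π/2), hkey (θ - π/2), Real.cos_add_pi_div_two, Real.sin_add_pi_div_two,
      Real.cos_sub_pi_div_two, Real.sin_sub_pi_div_two]
    push_cast
    ring
  rw [heq]
  exact h2
end
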